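/- Let Γ be a subgroup of (ℝ,+) and set Γ⁺ = Γ ∩ [0,∞). Let J_{Γ⁺⊆Γ} be the closed *-subalgebra of the C*-algebra of bounded complex-valued functions on Γ generated by the differences 1_{a+Γ⁺} − 1_{b+Γ⁺} for a, b ∈ Γ with a < b, and let C₀^λ(ℝ) be the closed *-subalgebra of the C*-algebra of bounded complex-valued functions on ℝ generated by the indicator functions 1_{[a,b)} of half-open intervals with a, b ∈ Γ, a < b. Then there exists a unique *-algebra isomorphism Ψ : J_{Γ⁺⊆Γ} → C₀^λ(ℝ) with Ψ(1_{a+Γ⁺} − 1_{b+Γ⁺}) = 1_{[a,b)} for all a, b ∈ Γ with a < b, and Ψ is Γ-equivariant for the translation actions (γ·f)(x) = f(−γ + x) on both sides. -/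

import Mathlib

open scoped Classical BoundedContinuousFunction

noncomputable section

/-- A type synonym equipping a type with the discrete topology, so that `Disc α →ᵇ ℂ`
is the C*-algebra of all bounded complex-valued functions on `α` with the supremum
norm, pointwise operations and complex conjugation as involution. -/
def Disc (α : Type*) : Type _ := α

instance (α : Type*) : TopologicalSpace (Disc α) := ⊥
instance (α : Type*) : DiscreteTopology (Disc α) := ⟨rfl⟩

variable (Γ : AddSubgroup ℝ)

/-- The indicator function `1_{a+Γ⁺}` of `a + Γ⁺ = {a + y : y ∈ Γ, 0 ≤ y}`, as a
bounded function on `Γ`. -/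
def indGamma (a : ℝ) : Disc Γ →ᵇ ℂ :=
  BoundedContinuousFunction.ofNormedAddCommGroup
    (fun x : Γ => if ∃ y : ℝ, y ∈ Γ ∧ 0 ≤ y ∧ (x : ℝ) = a + y then (1 : ℂ) else 0)
    continuous_of_discreteTopology 1
    (by intro x; first | (split <;> simp) | (split_ifs <;> simp))

/-- The indicator function `1_{[a,∞)}`, as a bounded function on `ℝ`. -/
def indIci (a : ℝ) : Disc ℝ →ᵇ ℂ :=
  BoundedContinuousFunction.ofNormedAddCommGroup
    (fun x : ℝ => if a ≤ x then (1 : ℂ) else 0)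
    continuous_of_discreteTopology 1
    (by intro x; first | (split <;> simp) | (split_ifs <;> simp))

/-- The translation action of `γ ∈ Γ` on bounded functions on `Γ`:
`(γ · f)(x) = f(−γ + x)`. -/
def transGamma (γ : Γ) (f : Disc Γ →ᵇ ℂ) : Disc Γ →ᵇ ℂ :=
  f.compContinuous ⟨fun x : Γ => -γ + x, continuous_of_discreteTopology⟩

/-- The translation action of `γ ∈ ℝ` on bounded functions on `ℝ`:
`(γ · f)(x) = f(−γ + x)`. -/
def transReal (γ : ℝ) (f : Disc ℝ →ᵇ ℂ) : Disc ℝ →ᵇ ℂ :=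
  f.compContinuous ⟨fun x : ℝ => -γ + x, continuous_of_discreteTopology⟩

/-- The indicator function `1_{[a,b)}`, as a bounded function on `ℝ`. -/
def indIco (a b : ℝ) : Disc ℝ →ᵇ ℂ :=
  BoundedContinuousFunction.ofNormedAddCommGroup
    (fun x : ℝ => if a ≤ x ∧ x < b then (1 : ℂ) else 0)
    continuous_of_discreteTopology 1
    (by intro x; first | (split <;> simp) | (split_ifs <;> simp))

/-- `J_{Γ⁺ ⊆ Γ}`: the closed *-subalgebra of the algebra of bounded functions on `Γ`
generated by the differences `1_{a+Γ⁺} − 1_{b+Γ⁺}` for `a, b ∈ Γ`, `a < b`. -/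
def JGamma : NonUnitalStarSubalgebra ℂ (Disc Γ →ᵇ ℂ) :=
  (NonUnitalStarAlgebra.adjoin ℂ
    {g : Disc Γ →ᵇ ℂ | ∃ a b : Γ, a < b ∧
      g = indGamma Γ (a : ℝ) - indGamma Γ (b : ℝ)}).topologicalClosure

/-- `C₀^λ(ℝ)`: the closed *-subalgebra of the algebra of bounded functions on `ℝ`
generated by the indicator functions `1_{[a,b)}` for `a, b ∈ Γ`, `a < b`. -/
def CIco : NonUnitalStarSubalgebra ℂ (Disc ℝ →ᵇ ℂ) :=
  (NonUnitalStarAlgebra.adjoin ℂ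
    {g : Disc ℝ →ᵇ ℂ | ∃ a b : Γ, a < b ∧
      g = indIco (a : ℝ) (b : ℝ)}).topologicalClosure

namespace JGammaAux

open BoundedContinuousFunction

variable (Γ : AddSubgroup ℝ)

def toR (x : Disc ↥Γ) : ℝ := (show ↥Γ from x).1

lemma toR_mem (x : Disc ↥Γ) : toR Γ x ∈ Γ := (show ↥Γ from x).2

def res : (Disc ℝ →ᵇ ℂ) →⋆ₙₐ[ℂ] (Disc ↥Γ →ᵇ ℂ) where
  toFun f := f.compContinuous ⟨fun x : Disc ↥Γ => toR Γ x, continuous_of_discreteTopology⟩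
  map_smul' _ _ := rfl
  map_zero' := rfl
  map_add' _ _ := rfl
  map_mul' _ _ := rfl
  map_star' _ := rfl

lemma res_apply (f : Disc ℝ →ᵇ ℂ) (x : Disc ↥Γ) : res Γ f x = f ((toR Γ x)) := rfl

lemma res_indIco (a b : ↥Γ) (hab : a < b) :
    res Γ (indIco (a : ℝ) (b : ℝ)) = indGamma Γ (a : ℝ) - indGamma Γ (b : ℝ) := by
  ext x
  have hab' : (a : ℝ) < (b : ℝ) := hab
  have key : ∀ c : ↥Γ, (∃ y : ℝ, y ∈ Γ ∧ 0 ≤ y ∧ (toR Γ x) = (c : ℝ) + y) ↔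
      (c : ℝ) ≤ (toR Γ x) := by
    intro c
    constructor
    · rintro ⟨y, -, hy, hxy⟩; linarith
    · intro h
      exact ⟨(toR Γ x) - (c : ℝ), sub_mem (toR_mem Γ x) c.2, by linarith, by ring⟩
  show (if (a : ℝ) ≤ (toR Γ x) ∧ (toR Γ x) < (b : ℝ) then (1:ℂ) else 0)
      = (indGamma Γ (a : ℝ) - indGamma Γ (b : ℝ)) x
  rw [BoundedContinuousFunction.sub_apply]
  show _ = (if ∃ y : ℝ, y ∈ Γ ∧ 0 ≤ y ∧ (toR Γ x) = (a : ℝ) + y then (1:ℂ) else 0)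
      - (if ∃ y : ℝ, y ∈ Γ ∧ 0 ≤ y ∧ (toR Γ x) = (b : ℝ) + y then (1:ℂ) else 0)
  rw [if_congr (key a) rfl rfl, if_congr (key b) rfl rfl]
  rcases le_or_gt (b : ℝ) (toR Γ x) with hb | hb
  · have ha : (a : ℝ) ≤ toR Γ x := le_trans hab'.le hb
    rw [if_pos ha, if_pos hb, if_neg (fun h => absurd h.2 (not_lt.2 hb))]
    norm_num
  · rcases le_or_gt (a : ℝ) (toR Γ x) with ha | ha
    · rw [if_pos (⟨ha, hb⟩ : _ ∧ _), if_pos ha, if_neg (not_le.2 hb)]; norm_num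
    · rw [if_neg (fun h => absurd h.1 (not_le.2 ha)), if_neg (not_le.2 ha), if_neg (not_le.2 hb)]
      norm_num

/-- The generating set of `CIco`. -/
def genR : Set (Disc ℝ →ᵇ ℂ) :=
  {g : Disc ℝ →ᵇ ℂ | ∃ a b : ↥Γ, a < b ∧ g = indIco (a : ℝ) (b : ℝ)}

/-- The generating set of `JGamma`. -/
def genG : Set (Disc ↥Γ →ᵇ ℂ) :=
  {g : Disc ↥Γ →ᵇ ℂ | ∃ a b : ↥Γ, a < b ∧ g = indGamma Γ (a : ℝ) - indGamma Γ (b : ℝ)}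

lemma CIco_eq : (CIco Γ : Set (Disc ℝ →ᵇ ℂ)) =
    closure (NonUnitalStarAlgebra.adjoin ℂ (genR Γ) : Set (Disc ℝ →ᵇ ℂ)) := rfl

lemma JGamma_eq : (JGamma Γ : Set (Disc ↥Γ →ᵇ ℂ)) =
    closure (NonUnitalStarAlgebra.adjoin ℂ (genG Γ) : Set (Disc ↥Γ →ᵇ ℂ)) := rfl

/-- `f` is a "step function" with jumps located in the finite set `S ⊆ Γ`. -/
def Stepped (f : Disc ℝ →ᵇ ℂ) : Prop :=
  ∃ S : Finset ℝ, (↑S : Set ℝ) ⊆ (Γ : Set ℝ) ∧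
    (∀ x : ℝ, (∀ s ∈ S, x < s) → f x = 0) ∧
    (∀ x y : ℝ, (∀ s ∈ S, (s ≤ x ↔ s ≤ y)) → f x = f y)

lemma stepped_mono {f : Disc ℝ →ᵇ ℂ} {S T : Finset ℝ}
    (hST : S ⊆ T)
    (h1 : ∀ x : ℝ, (∀ s ∈ S, x < s) → f x = 0)
    (h2 : ∀ x y : ℝ, (∀ s ∈ S, (s ≤ x ↔ s ≤ y)) → f x = f y) :
    (∀ x : ℝ, (∀ s ∈ T, x < s) → f x = 0) ∧
    (∀ x y : ℝ, (∀ s ∈ T, (s ≤ x ↔ s ≤ y)) → f x = f y) :=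
  ⟨fun x hx => h1 x fun s hs => hx s (hST hs),
   fun x y hxy => h2 x y fun s hs => hxy s (hST hs)⟩

lemma stepped_of_mem_adjoin {f : Disc ℝ →ᵇ ℂ}
    (hf : f ∈ NonUnitalStarAlgebra.adjoin ℂ (genR Γ)) : Stepped Γ f := by
  induction hf using NonUnitalStarAlgebra.adjoin_induction with
  | mem g hg =>
    obtain ⟨a, b, hab, rfl⟩ := hg
    refine ⟨{(a : ℝ), (b : ℝ)}, ?_, ?_, ?_⟩
    · intro s hs
      simp only [Finset.coe_insert, Finset.coe_singleton, Set.mem_insert_iff,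
        Set.mem_singleton_iff] at hs
      rcases hs with rfl | rfl
      · exact a.2
      · exact b.2
    · intro x hx
      have hxa : x < (a : ℝ) := hx _ (by simp)
      show (if (a : ℝ) ≤ x ∧ x < (b : ℝ) then (1:ℂ) else 0) = 0
      rw [if_neg (fun h => absurd h.1 (not_le.2 hxa))]
    · intro x y hxy
      have hxa := hxy (a : ℝ) (by simp)
      have hxb := hxy (b : ℝ) (by simp)
      show (if (a : ℝ) ≤ x ∧ x < (b : ℝ) then (1:ℂ) else 0)
        = (if (a : ℝ) ≤ y ∧ y < (b : ℝ) then (1:ℂ) else 0)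
      rw [if_congr (by rw [hxa, ← not_le, hxb, not_le]) rfl rfl]
  | add g₁ g₂ _ _ ih₁ ih₂ =>
    obtain ⟨S₁, hS₁, hv₁, hc₁⟩ := ih₁
    obtain ⟨S₂, hS₂, hv₂, hc₂⟩ := ih₂
    obtain ⟨hv₁', hc₁'⟩ := stepped_mono (Finset.subset_union_left (s₂ := S₂)) hv₁ hc₁
    obtain ⟨hv₂', hc₂'⟩ := stepped_mono (Finset.subset_union_right (s₁ := S₁)) hv₂ hc₂
    refine ⟨S₁ ∪ S₂, ?_, ?_, ?_⟩
    · intro s hs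
      rcases Finset.mem_union.1 (by exact_mod_cast hs) with h | h
      · exact hS₁ (by exact_mod_cast h)
      · exact hS₂ (by exact_mod_cast h)
    · intro x hx
      show g₁ x + g₂ x = 0
      rw [hv₁' x hx, hv₂' x hx, add_zero]
    · intro x y hxy
      show g₁ x + g₂ x = g₁ y + g₂ y
      rw [hc₁' x y hxy, hc₂' x y hxy]
  | zero => exact ⟨∅, by simp, fun x _ => rfl, fun x y _ => rfl⟩
  | mul g₁ g₂ _ _ ih₁ ih₂ =>
    obtain ⟨S₁, hS₁, hv₁, hc₁⟩ := ih₁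
    obtain ⟨S₂, hS₂, hv₂, hc₂⟩ := ih₂
    obtain ⟨hv₁', hc₁'⟩ := stepped_mono (Finset.subset_union_left (s₂ := S₂)) hv₁ hc₁
    obtain ⟨hv₂', hc₂'⟩ := stepped_mono (Finset.subset_union_right (s₁ := S₁)) hv₂ hc₂
    refine ⟨S₁ ∪ S₂, ?_, ?_, ?_⟩
    · intro s hs
      rcases Finset.mem_union.1 (by exact_mod_cast hs) with h | h
      · exact hS₁ (by exact_mod_cast h)
      · exact hS₂ (by exact_mod_cast h)
    · intro x hx
      show g₁ x * g₂ x = 0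
      rw [hv₁' x hx, zero_mul]
    · intro x y hxy
      show g₁ x * g₂ x = g₁ y * g₂ y
      rw [hc₁' x y hxy, hc₂' x y hxy]
  | smul r g _ ih =>
    obtain ⟨S, hS, hv, hc⟩ := ih
    refine ⟨S, hS, ?_, ?_⟩
    · intro x hx
      show r • g x = 0
      rw [hv x hx, smul_zero]
    · intro x y hxy
      show r • g x = r • g y
      rw [hc x y hxy]
  | star g _ ih =>
    obtain ⟨S, hS, hv, hc⟩ := ih
    refine ⟨S, hS, ?_, ?_⟩
    · intro x hx
      show star (g x) = 0
      rw [hv x hx, star_zero]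
    · intro x y hxy
      show star (g x) = star (g y)
      rw [hc x y hxy]

lemma norm_le_norm_res {f : Disc ℝ →ᵇ ℂ}
    (hf : f ∈ NonUnitalStarAlgebra.adjoin ℂ (genR Γ)) : ‖f‖ ≤ ‖res Γ f‖ := by
  obtain ⟨S, hSΓ, hv, hc⟩ := stepped_of_mem_adjoin Γ hf
  rw [BoundedContinuousFunction.norm_le (norm_nonneg _)]
  show ∀ x : ℝ, ‖f x‖ ≤ ‖res Γ f‖
  intro x
  by_cases h : ∃ s ∈ S, s ≤ x
  · set T := S.filter (fun s => s ≤ x) with hT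
    have hTne : T.Nonempty := by
      obtain ⟨s, hs, hsx⟩ := h
      exact ⟨s, Finset.mem_filter.2 ⟨hs, hsx⟩⟩
    set s₀ := T.max' hTne with hs₀
    have hs₀T : s₀ ∈ T := T.max'_mem hTne
    have hs₀S : s₀ ∈ S := (Finset.mem_filter.1 hs₀T).1
    have hs₀x : s₀ ≤ x := (Finset.mem_filter.1 hs₀T).2
    have hpat : ∀ s ∈ S, (s ≤ x ↔ s ≤ s₀) := by
      intro s hs
      constructor
      · intro hsx
        exact T.le_max' s (Finset.mem_filter.2 ⟨hs, hsx⟩)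
      · intro hss₀
        exact le_trans hss₀ hs₀x
    have hfx : f x = f s₀ := hc x s₀ hpat
    have hmem : s₀ ∈ Γ := hSΓ (by exact_mod_cast hs₀S)
    have : f s₀ = res Γ f (show Disc ↥Γ from (⟨s₀, hmem⟩ : ↥Γ)) := rfl
    rw [hfx, this]
    exact BoundedContinuousFunction.norm_coe_le_norm _ _
  · push_neg at h
    rw [hv x fun s hs => h s hs]
    simp

lemma res_continuous : Continuous (res Γ) :=
  AddMonoidHomClass.continuous_of_bound (res Γ) 1 fun f => by
    rw [one_mul]
    exact BoundedContinuousFunction.norm_compContinuous_le f _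

lemma norm_res_eq {f : Disc ℝ →ᵇ ℂ} (hf : f ∈ CIco Γ) : ‖res Γ f‖ = ‖f‖ := by
  refine le_antisymm (BoundedContinuousFunction.norm_compContinuous_le f _) ?_
  have hcl : IsClosed {g : Disc ℝ →ᵇ ℂ | ‖g‖ ≤ ‖res Γ g‖} :=
    isClosed_le continuous_norm (continuous_norm.comp (res_continuous Γ))
  exact closure_minimal (fun g hg => norm_le_norm_res Γ hg) hcl hf

lemma res_mem_JGamma {f : Disc ℝ →ᵇ ℂ} (hf : f ∈ CIco Γ) : res Γ f ∈ JGamma Γ := by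
  have hmaps : ∀ g ∈ (NonUnitalStarAlgebra.adjoin ℂ (genR Γ) : Set (Disc ℝ →ᵇ ℂ)),
      res Γ g ∈ NonUnitalStarAlgebra.adjoin ℂ (genG Γ) := by
    intro g hg
    induction hg using NonUnitalStarAlgebra.adjoin_induction with
    | mem g hg =>
      obtain ⟨a, b, hab, rfl⟩ := hg
      rw [res_indIco Γ a b hab]
      exact NonUnitalStarAlgebra.subset_adjoin ℂ _ ⟨a, b, hab, rfl⟩
    | add g₁ g₂ _ _ ih₁ ih₂ => rw [map_add]; exact add_mem ih₁ ih₂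
    | zero => rw [map_zero]; exact zero_mem _
    | mul g₁ g₂ _ _ ih₁ ih₂ => rw [map_mul]; exact mul_mem ih₁ ih₂
    | smul r g _ ih => rw [map_smul]; exact SMulMemClass.smul_mem r ih
    | star g _ ih => rw [map_star]; exact star_mem ih
  exact map_mem_closure (res_continuous Γ) hf hmaps

lemma indIco_mem_CIco (a b : ↥Γ) (hab : a < b) : indIco (a : ℝ) (b : ℝ) ∈ CIco Γ :=
  (NonUnitalStarSubalgebra.le_topologicalClosure _)
    (NonUnitalStarAlgebra.subset_adjoin ℂ _ ⟨a, b, hab, rfl⟩)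

instance : CompleteSpace (CIco Γ) :=
  IsComplete.completeSpace_coe (NonUnitalStarSubalgebra.isClosed_topologicalClosure _).isComplete

/-- The restriction map as a map `CIco Γ → JGamma Γ`. -/
def resSub (u : CIco Γ) : JGamma Γ := ⟨res Γ (u : Disc ℝ →ᵇ ℂ), res_mem_JGamma Γ u.2⟩

lemma resSub_isometry : Isometry (fun u : CIco Γ => res Γ (u : Disc ℝ →ᵇ ℂ)) := by
  refine Isometry.of_dist_eq fun u v => ?_
  rw [dist_eq_norm, dist_eq_norm, ← map_sub]
  have : (u : Disc ℝ →ᵇ ℂ) - v ∈ CIco Γ := sub_mem u.2 v.2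
  rw [norm_res_eq Γ this]
  rfl

lemma resSub_injective : Function.Injective (resSub Γ) := by
  intro u v huv
  have := congrArg (Subtype.val) huv
  exact (resSub_isometry Γ).injective this

lemma resSub_surjective : Function.Surjective (resSub Γ) := by
  have himT : IsClosed (Set.range fun u : CIco Γ => res Γ (u : Disc ℝ →ᵇ ℂ)) :=
    ((resSub_isometry Γ).isClosedEmbedding).isClosed_range
  have hsub : (JGamma Γ : Set (Disc ↥Γ →ᵇ ℂ)) ⊆
      Set.range fun u : CIco Γ => res Γ (u : Disc ℝ →ᵇ ℂ) := by
    rw [JGamma_eq]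
    refine closure_minimal ?_ himT
    intro g hg
    induction hg using NonUnitalStarAlgebra.adjoin_induction with
    | mem g hg =>
      obtain ⟨a, b, hab, rfl⟩ := hg
      exact ⟨⟨indIco (a : ℝ) (b : ℝ), indIco_mem_CIco Γ a b hab⟩, res_indIco Γ a b hab⟩
    | add g₁ g₂ _ _ ih₁ ih₂ =>
      obtain ⟨u, hu⟩ := ih₁; obtain ⟨v, hv⟩ := ih₂
      exact ⟨u + v, by rw [← hu, ← hv]; exact map_add (res Γ) _ _⟩
    | zero => exact ⟨0, map_zero (res Γ)⟩
    | mul g₁ g₂ _ _ ih₁ ih₂ =>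
      obtain ⟨u, hu⟩ := ih₁; obtain ⟨v, hv⟩ := ih₂
      exact ⟨u * v, by rw [← hu, ← hv]; exact map_mul (res Γ) _ _⟩
    | smul r g _ ih =>
      obtain ⟨u, hu⟩ := ih
      exact ⟨r • u, by rw [← hu]; exact map_smul (res Γ) _ _⟩
    | star g _ ih =>
      obtain ⟨u, hu⟩ := ih
      exact ⟨star u, by rw [← hu]; exact map_star (res Γ) _⟩
  intro g
  obtain ⟨u, hu⟩ := hsub g.2
  exact ⟨u, Subtype.ext hu⟩

/-- The restriction map as a star-algebra isomorphism `CIco Γ ≃⋆ₐ[ℂ] JGamma Γ`. -/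
def resEquiv : CIco Γ ≃⋆ₐ[ℂ] JGamma Γ :=
  { Equiv.ofBijective (resSub Γ) ⟨resSub_injective Γ, resSub_surjective Γ⟩ with
    map_mul' := fun u v => Subtype.ext (map_mul (res Γ) _ _)
    map_add' := fun u v => Subtype.ext (map_add (res Γ) _ _)
    map_smul' := fun r u => Subtype.ext (map_smul (res Γ) r _)
    map_star' := fun u => Subtype.ext (map_star (res Γ) _) }

lemma resEquiv_apply (u : CIco Γ) :
    ((resEquiv Γ u : JGamma Γ) : Disc ↥Γ →ᵇ ℂ) = res Γ (u : Disc ℝ →ᵇ ℂ) := rfl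

def toRR (x : Disc ℝ) : ℝ := show ℝ from x

lemma transReal_indIco (c a b : ℝ) : transReal c (indIco a b) = indIco (a + c) (b + c) := by
  ext x
  show (if a ≤ -c + toRR x ∧ -c + toRR x < b then (1:ℂ) else 0)
      = (if a + c ≤ toRR x ∧ toRR x < b + c then (1:ℂ) else 0)
  have hiff : (a ≤ -c + toRR x ∧ -c + toRR x < b) ↔ (a + c ≤ toRR x ∧ toRR x < b + c) :=
    ⟨fun h => ⟨by linarith [h.1], by linarith [h.2]⟩,
     fun h => ⟨by linarith [h.1], by linarith [h.2]⟩⟩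
  rw [if_congr hiff rfl rfl]

/-- Translation as a star algebra homomorphism. -/
def transHom (c : ℝ) : (Disc ℝ →ᵇ ℂ) →⋆ₙₐ[ℂ] (Disc ℝ →ᵇ ℂ) where
  toFun := transReal c
  map_smul' _ _ := rfl
  map_zero' := rfl
  map_add' _ _ := rfl
  map_mul' _ _ := rfl
  map_star' _ := rfl

lemma transReal_mem (γ : ↥Γ) {f : Disc ℝ →ᵇ ℂ} (hf : f ∈ CIco Γ) :
    transReal (γ : ℝ) f ∈ CIco Γ := by
  have hcont : Continuous (transHom (γ : ℝ)) :=
    AddMonoidHomClass.continuous_of_bound (transHom (γ : ℝ)) 1 fun g => by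
      rw [one_mul]; exact BoundedContinuousFunction.norm_compContinuous_le g _
  have hmaps : ∀ g ∈ (NonUnitalStarAlgebra.adjoin ℂ (genR Γ) : Set (Disc ℝ →ᵇ ℂ)),
      transHom (γ : ℝ) g ∈ NonUnitalStarAlgebra.adjoin ℂ (genR Γ) := by
    intro g hg
    induction hg using NonUnitalStarAlgebra.adjoin_induction with
    | mem g hg =>
      obtain ⟨a, b, hab, rfl⟩ := hg
      have : transHom (γ : ℝ) (indIco (a : ℝ) (b : ℝ)) = indIco ((a : ℝ) + γ) ((b : ℝ) + γ) :=
        transReal_indIco (γ : ℝ) (a : ℝ) (b : ℝ)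
      rw [this]
      refine NonUnitalStarAlgebra.subset_adjoin ℂ _ ⟨a + γ, b + γ, ?_, rfl⟩
      exact add_lt_add_left hab γ
    | add g₁ g₂ _ _ ih₁ ih₂ => rw [map_add]; exact add_mem ih₁ ih₂
    | zero => rw [map_zero]; exact zero_mem _
    | mul g₁ g₂ _ _ ih₁ ih₂ => rw [map_mul]; exact mul_mem ih₁ ih₂
    | smul r g _ ih => rw [map_smul]; exact SMulMemClass.smul_mem r ih
    | star g _ ih => rw [map_star]; exact star_mem ih
  exact map_mem_closure hcont hf hmaps

lemma res_trans (γ : ↥Γ) (f : Disc ℝ →ᵇ ℂ) :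
    res Γ (transReal (γ : ℝ) f) = transGamma Γ γ (res Γ f) := rfl

/-- The value of the isomorphism on generators. -/
lemma resEquiv_symm_gen (a b : ↥Γ) (hab : a < b)
    (h : indGamma Γ (a : ℝ) - indGamma Γ (b : ℝ) ∈ JGamma Γ) :
    (((resEquiv Γ).symm ⟨indGamma Γ (a : ℝ) - indGamma Γ (b : ℝ), h⟩ : CIco Γ) : Disc ℝ →ᵇ ℂ)
      = indIco (a : ℝ) (b : ℝ) := by
  have hu : indIco (a : ℝ) (b : ℝ) ∈ CIco Γ := indIco_mem_CIco Γ a b hab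
  have he : resEquiv Γ ⟨indIco (a : ℝ) (b : ℝ), hu⟩
      = ⟨indGamma Γ (a : ℝ) - indGamma Γ (b : ℝ), h⟩ :=
    Subtype.ext (res_indIco Γ a b hab)
  rw [← he, StarAlgEquiv.symm_apply_apply]

end JGammaAux

set_option maxHeartbeats 2000000 in
set_option synthInstance.maxHeartbeats 1000000 in
open JGammaAux in
/-- Let `Γ` be a subgroup of `(ℝ,+)` and `Γ⁺ = Γ ∩ [0,∞)`.  There
exists a unique *-algebra isomorphism `Ψ : J_{Γ⁺⊆Γ} → C₀^λ(ℝ)` with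
`Ψ(1_{a+Γ⁺} − 1_{b+Γ⁺}) = 1_{[a,b)}` for all `a, b ∈ Γ` with `a < b`, and `Ψ` is
`Γ`-equivariant for the translation actions `(γ·f)(x) = f(−γ+x)` on both sides. -/
theorem JGamma_iso_CIco (Γ : AddSubgroup ℝ) :
    ∃ Φ : JGamma Γ ≃⋆ₐ[ℂ] CIco Γ,
      (∀ a b : Γ, a < b →
        ∀ h : indGamma Γ (a : ℝ) - indGamma Γ (b : ℝ) ∈ JGamma Γ,
        ((Φ ⟨indGamma Γ (a : ℝ) - indGamma Γ (b : ℝ), h⟩ : Disc ℝ →ᵇ ℂ) =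
          indIco (a : ℝ) (b : ℝ))) ∧
      (∀ γ : Γ, ∀ f : Disc ↥Γ →ᵇ ℂ, ∀ hf : f ∈ JGamma Γ,
        ∀ hγf : transGamma Γ γ f ∈ JGamma Γ,
          ((Φ ⟨transGamma Γ γ f, hγf⟩ : Disc ℝ →ᵇ ℂ) =
            transReal (γ : ℝ) (Φ ⟨f, hf⟩ : Disc ℝ →ᵇ ℂ))) ∧
      ∀ Ψ : JGamma Γ ≃⋆ₐ[ℂ] CIco Γ,
        (∀ a b : Γ, a < b →
          ∀ h : indGamma Γ (a : ℝ) - indGamma Γ (b : ℝ) ∈ JGamma Γ,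
          ((Ψ ⟨indGamma Γ (a : ℝ) - indGamma Γ (b : ℝ), h⟩ : Disc ℝ →ᵇ ℂ) =
            indIco (a : ℝ) (b : ℝ))) → Ψ = Φ := by
  refine ⟨(resEquiv Γ).symm, ?_, ?_, ?_⟩
  · intro a b hab h
    exact resEquiv_symm_gen Γ a b hab h
  · intro γ f hf hγf
    set u := (resEquiv Γ).symm ⟨f, hf⟩ with hu
    have hru : res Γ (u : Disc ℝ →ᵇ ℂ) = f := by
      have h1 := (resEquiv Γ).apply_symm_apply ⟨f, hf⟩
      have := congrArg Subtype.val h1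
      exact this
    have hm : transReal (γ : ℝ) (u : Disc ℝ →ᵇ ℂ) ∈ CIco Γ := transReal_mem Γ γ u.2
    have key : resEquiv Γ ⟨transReal (γ : ℝ) (u : Disc ℝ →ᵇ ℂ), hm⟩
        = ⟨transGamma Γ γ f, hγf⟩ := by
      refine Subtype.ext ?_
      show res Γ _ = _
      rw [res_trans, hru]
    rw [← key, StarAlgEquiv.symm_apply_apply]
  · intro Ψ hΨ
    haveI hJcl : IsClosed ((JGamma Γ : Set (Disc ↥Γ →ᵇ ℂ))) :=
      NonUnitalStarSubalgebra.isClosed_topologicalClosure _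
    haveI hCcl : IsClosed ((CIco Γ : Set (Disc ℝ →ᵇ ℂ))) :=
      NonUnitalStarSubalgebra.isClosed_topologicalClosure _
    have hcont1 : Continuous Ψ := (StarAlgEquiv.isometry Ψ).continuous
    have hcont2 : Continuous ((resEquiv Γ).symm) :=
      (StarAlgEquiv.isometry ((resEquiv Γ).symm)).continuous
    refine StarAlgEquiv.ext fun x => ?_
    have hZ : IsClosed {y : JGamma Γ | Ψ y = (resEquiv Γ).symm y} :=
      isClosed_eq hcont1 hcont2
    have hD : ∀ g, g ∈ NonUnitalStarAlgebra.adjoin ℂ (genG Γ) →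
        ∀ hg' : g ∈ JGamma Γ, Ψ ⟨g, hg'⟩ = (resEquiv Γ).symm ⟨g, hg'⟩ := by
      intro g hg
      induction hg using NonUnitalStarAlgebra.adjoin_induction with
      | mem g hg =>
        intro hg'
        obtain ⟨a, b, hab, rfl⟩ := hg
        refine Subtype.ext ?_
        rw [hΨ a b hab hg', resEquiv_symm_gen Γ a b hab hg']
      | add g₁ g₂ hg₁ hg₂ ih₁ ih₂ =>
        intro h'
        have hJ₁ : g₁ ∈ JGamma Γ := NonUnitalStarSubalgebra.le_topologicalClosure _ hg₁
        have hJ₂ : g₂ ∈ JGamma Γ := NonUnitalStarSubalgebra.le_topologicalClosure _ hg₂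
        have : (⟨g₁ + g₂, h'⟩ : JGamma Γ) = ⟨g₁, hJ₁⟩ + ⟨g₂, hJ₂⟩ := rfl
        rw [this, map_add, map_add, ih₁ hJ₁, ih₂ hJ₂]
      | zero =>
        intro h'
        have : (⟨0, h'⟩ : JGamma Γ) = 0 := rfl
        rw [this, map_zero, map_zero]
      | mul g₁ g₂ hg₁ hg₂ ih₁ ih₂ =>
        intro h'
        have hJ₁ : g₁ ∈ JGamma Γ := NonUnitalStarSubalgebra.le_topologicalClosure _ hg₁
        have hJ₂ : g₂ ∈ JGamma Γ := NonUnitalStarSubalgebra.le_topologicalClosure _ hg₂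
        have : (⟨g₁ * g₂, h'⟩ : JGamma Γ) = ⟨g₁, hJ₁⟩ * ⟨g₂, hJ₂⟩ := rfl
        rw [this, map_mul, map_mul, ih₁ hJ₁, ih₂ hJ₂]
      | smul r g hg ih =>
        intro h'
        have hJ : g ∈ JGamma Γ := NonUnitalStarSubalgebra.le_topologicalClosure _ hg
        have : (⟨r • g, h'⟩ : JGamma Γ) = r • ⟨g, hJ⟩ := rfl
        rw [this, map_smul, map_smul, ih hJ]
      | star g hg ih =>
        intro h'
        have hJ : g ∈ JGamma Γ := NonUnitalStarSubalgebra.le_topologicalClosure _ hg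
        have : (⟨star g, h'⟩ : JGamma Γ) = star (⟨g, hJ⟩ : JGamma Γ) := rfl
        rw [this, map_star, map_star, ih hJ]
    have hDZ : {y : JGamma Γ | (y : Disc ↥Γ →ᵇ ℂ) ∈ NonUnitalStarAlgebra.adjoin ℂ (genG Γ)}
        ⊆ {y : JGamma Γ | Ψ y = (resEquiv Γ).symm y} := by
      intro y hy
      have := hD (y : Disc ↥Γ →ᵇ ℂ) hy y.2
      simpa using this
    have hxcl : x ∈ closure
        {y : JGamma Γ | (y : Disc ↥Γ →ᵇ ℂ) ∈ NonUnitalStarAlgebra.adjoin ℂ (genG Γ)} := by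
      rw [closure_subtype]
      have himg : (Subtype.val ''
          {y : JGamma Γ | (y : Disc ↥Γ →ᵇ ℂ) ∈ NonUnitalStarAlgebra.adjoin ℂ (genG Γ)})
          = (NonUnitalStarAlgebra.adjoin ℂ (genG Γ) : Set (Disc ↥Γ →ᵇ ℂ)) := by
        ext g
        constructor
        · rintro ⟨y, hy, rfl⟩; exact hy
        · intro hg
          exact ⟨⟨g, NonUnitalStarSubalgebra.le_topologicalClosure _ hg⟩, hg, rfl⟩
      rw [himg]
      exact x.2
    exact closure_minimal hDZ hZ hxcl


end
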